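/- For every r ∈ (0,1], f_0(r) is a positive real number, and e^{−iπ/n} f_0(r e^{iπ/n}) is a positive real number. Hence the curves r ↦ f_0(r) and r ↦ f_0(r e^{iπ/n}) are straight line segments along the rays of argument 0 and π/n respectively. -/

import Mathlib

open Real

noncomputable def A (m : ℕ) : ℝ := (Nat.centralBinom m : ℝ) / 4 ^ m

noncomputable def c (n m : ℕ) : ℝ := A m / (2 * m * n + 1)

noncomputable def d (n m : ℕ) : ℝ := A m * ((n : ℝ) - 1) / ((n : ℝ) * (2 * m + 1) - 1)

noncomputable def H (n : ℕ) (z : ℂ) : ℂ := ∑' m : ℕ, (c n m : ℂ) * z ^ m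

noncomputable def G (n : ℕ) (z : ℂ) : ℂ := ∑' m : ℕ, (d n m : ℂ) * z ^ m

noncomputable def hh (n : ℕ) (z : ℂ) : ℂ := ∑' m : ℕ, (c n m : ℂ) * z ^ (2 * m * n + 1)

noncomputable def gg (n : ℕ) (z : ℂ) : ℂ :=
  (1 / ((n : ℂ) - 1)) * ∑' m : ℕ, (d n m : ℂ) * z ^ (2 * m * n + n - 1)

noncomputable def f (n : ℕ) (β : ℝ) (z : ℂ) : ℂ :=
  Complex.exp (Complex.I * β / 2) * hh n z +
    Complex.exp (-(Complex.I * β / 2)) * (starRingEnd ℂ) (gg n z)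

noncomputable def K (n : ℕ) : ℝ :=
  Real.sqrt π * Real.Gamma (1 + 1 / (2 * n)) / Real.Gamma (1 / 2 + 1 / (2 * n))


lemma A_zero : A 0 = 1 := by simp [A, Nat.centralBinom]

lemma A_pos (m : ℕ) : 0 < A m := by
  have h : (0:ℝ) < Nat.centralBinom m := by exact_mod_cast Nat.centralBinom_pos m
  unfold A; positivity

lemma A_succ (m : ℕ) : A (m+1) = A m * (2*m+1) / (2*m+2) := by
  have h' : ((m:ℝ)+1) * Nat.centralBinom (m+1) = 2*(2*(m:ℝ)+1) * Nat.centralBinom m := by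
    exact_mod_cast Nat.succ_mul_centralBinom_succ m
  have hm : ((m:ℝ)+1) ≠ 0 := by positivity
  unfold A
  rw [pow_succ]
  field_simp
  linear_combination 2 * h'

lemma A_sq (m : ℕ) : (A m)^2 * (2*m+1) ≤ 1 := by
  induction m with
  | zero => simp [A_zero]
  | succ k ih =>
    have h := A_succ k
    have hp := A_pos k
    rw [h]
    push_cast
    have h1 : (0:ℝ) < 2*(k:ℝ)+2 := by positivity
    rw [div_pow, mul_pow]
    rw [div_mul_eq_mul_div, div_le_one (by positivity)]
    nlinarith [sq_nonneg (A k), sq_nonneg ((2:ℝ)*k+1)]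


lemma A_le (m : ℕ) : A m * Real.sqrt ((m:ℝ)+1) ≤ 1 := by
  have h := A_sq m
  have hp := A_pos m
  have hs : Real.sqrt ((m:ℝ)+1) ^ 2 = (m:ℝ)+1 := Real.sq_sqrt (by positivity)
  nlinarith [Real.sqrt_nonneg ((m:ℝ)+1), sq_nonneg (A m * Real.sqrt ((m:ℝ)+1) - 1),
    sq_nonneg (A m)]

noncomputable def bnd (m : ℕ) : ℝ := 1 / (((m:ℝ)+1) * Real.sqrt ((m:ℝ)+1))

lemma bnd_summable : Summable bnd := by
  have h0 : Summable (fun k : ℕ => (k:ℝ) ^ (-(3/2) : ℝ)) :=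
    Real.summable_nat_rpow.mpr (by norm_num)
  have h1 : Summable (fun m : ℕ => ((m+1:ℕ):ℝ) ^ (-(3/2) : ℝ)) :=
    (summable_nat_add_iff 1).mpr h0
  refine h1.congr fun m => ?_
  have hp : (0:ℝ) < (m:ℝ)+1 := by positivity
  rw [show ((m+1:ℕ):ℝ) = (m:ℝ)+1 by push_cast; ring, Real.rpow_neg hp.le,
    show (3/2:ℝ) = 1 + 1/2 by norm_num, Real.rpow_add hp, Real.rpow_one,
    ← Real.sqrt_eq_rpow, bnd, one_div]

lemma bnd_nonneg (m : ℕ) : 0 ≤ bnd m := by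
  unfold bnd; positivity

lemma A_div_le_bnd (m : ℕ) : A m / ((m:ℝ)+1) ≤ bnd m := by
  have h := A_le m
  have hp : (0:ℝ) < (m:ℝ)+1 := by positivity
  have hs : 0 < Real.sqrt ((m:ℝ)+1) := Real.sqrt_pos.mpr hp
  rw [bnd, div_le_div_iff₀ hp (by positivity)]
  nlinarith

lemma c_le_bnd {n : ℕ} (hn : 3 ≤ n) (m : ℕ) : c n m ≤ bnd m := by
  have hn3 : (3:ℝ) ≤ (n:ℝ) := by exact_mod_cast hn
  refine le_trans ?_ (A_div_le_bnd m)
  apply div_le_div_of_nonneg_left (A_pos m).le (by positivity)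
  nlinarith [(Nat.cast_nonneg m : (0:ℝ) ≤ m)]

lemma c_nonneg (n m : ℕ) : 0 ≤ c n m := by
  have := (A_pos m).le
  unfold c
  positivity

lemma d_eq {n : ℕ} (hn : 3 ≤ n) (m : ℕ) :
    d n m = ((n:ℝ)-1) * (A m / ((n:ℝ)*(2*m+1)-1)) := by
  unfold d; ring

lemma denom_pos {n : ℕ} (hn : 3 ≤ n) (m : ℕ) : (0:ℝ) < (n:ℝ)*(2*m+1)-1 := by
  have hn3 : (3:ℝ) ≤ (n:ℝ) := by exact_mod_cast hn
  nlinarith [(Nat.cast_nonneg m : (0:ℝ) ≤ m)]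

lemma dq_le_bnd {n : ℕ} (hn : 3 ≤ n) (m : ℕ) : A m / ((n:ℝ)*(2*m+1)-1) ≤ bnd m := by
  have hn3 : (3:ℝ) ≤ (n:ℝ) := by exact_mod_cast hn
  refine le_trans ?_ (A_div_le_bnd m)
  apply div_le_div_of_nonneg_left (A_pos m).le (by positivity)
  nlinarith [(Nat.cast_nonneg m : (0:ℝ) ≤ m)]

lemma dq_nonneg {n : ℕ} (hn : 3 ≤ n) (m : ℕ) : 0 ≤ A m / ((n:ℝ)*(2*m+1)-1) :=
  div_nonneg (A_pos m).le (denom_pos hn m).le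

lemma summable_S1 {n : ℕ} (hn : 3 ≤ n) {r : ℝ} (hr0 : 0 < r) (hr1 : r ≤ 1) :
    Summable (fun m : ℕ => c n m * r ^ (2*m*n+1)) := by
  refine Summable.of_nonneg_of_le (fun m => ?_) (fun m => ?_) bnd_summable
  · exact mul_nonneg (c_nonneg n m) (pow_nonneg hr0.le _)
  · calc c n m * r ^ (2*m*n+1) ≤ c n m * 1 :=
        mul_le_mul_of_nonneg_left (pow_le_one₀ hr0.le hr1) (c_nonneg n m)
    _ ≤ bnd m := by rw [mul_one]; exact c_le_bnd hn m

lemma summable_S2q {n : ℕ} (hn : 3 ≤ n) {r : ℝ} (hr0 : 0 < r) (hr1 : r ≤ 1) :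
    Summable (fun m : ℕ => A m / ((n:ℝ)*(2*m+1)-1) * r ^ (2*m*n+n-1)) := by
  refine Summable.of_nonneg_of_le (fun m => ?_) (fun m => ?_) bnd_summable
  · exact mul_nonneg (dq_nonneg hn m) (pow_nonneg hr0.le _)
  · calc A m / ((n:ℝ)*(2*m+1)-1) * r ^ (2*m*n+n-1) ≤ A m / ((n:ℝ)*(2*m+1)-1) * 1 :=
        mul_le_mul_of_nonneg_left (pow_le_one₀ hr0.le hr1) (dq_nonneg hn m)
    _ ≤ bnd m := by rw [mul_one]; exact dq_le_bnd hn m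

lemma summable_S2 {n : ℕ} (hn : 3 ≤ n) {r : ℝ} (hr0 : 0 < r) (hr1 : r ≤ 1) :
    Summable (fun m : ℕ => d n m * r ^ (2*m*n+n-1)) := by
  have h := (summable_S2q hn hr0 hr1).mul_left ((n:ℝ)-1)
  refine h.congr fun m => ?_
  rw [d_eq hn]; ring

lemma term_pos {n : ℕ} (hn : 3 ≤ n) {r : ℝ} (hr0 : 0 < r) (hr1 : r ≤ 1) (m : ℕ) :
    0 < c n m * r ^ (2*m*n+1) - A m / ((n:ℝ)*(2*m+1)-1) * r ^ (2*m*n+n-1) := by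
  have hn3 : (3:ℝ) ≤ (n:ℝ) := by exact_mod_cast hn
  have hd := denom_pos hn m
  have hq : A m / ((n:ℝ)*(2*m+1)-1) < c n m := by
    unfold c
    apply div_lt_div_of_pos_left (A_pos m) (by positivity)
    nlinarith [(Nat.cast_nonneg m : (0:ℝ) ≤ m)]
  have hpow : r ^ (2*m*n+n-1) ≤ r ^ (2*m*n+1) :=
    pow_le_pow_of_le_one hr0.le hr1 (by omega)
  have h1 : (0:ℝ) < r ^ (2*m*n+1) := pow_pos hr0 _
  nlinarith [dq_nonneg hn m, pow_nonneg hr0.le (2*m*n+n-1)]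

lemma E_pow1 {n : ℕ} (hn : 3 ≤ n) (m : ℕ) :
    (Complex.exp (Complex.I * ((π/n : ℝ):ℂ))) ^ (2*m*n+1)
      = Complex.exp (Complex.I * ((π/n : ℝ):ℂ)) := by
  rw [← Complex.exp_nat_mul]
  have hn0 : (n:ℂ) ≠ 0 := Nat.cast_ne_zero.mpr (by omega)
  have key : ((2*m*n+1 : ℕ) : ℂ) * (Complex.I * ((π/n : ℝ):ℂ))
      = (m:ℤ) * (2*(π:ℝ)*Complex.I) + Complex.I * ((π/n : ℝ):ℂ) := by
    push_cast
    field_simp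
  rw [key, Complex.exp_add, Complex.exp_int_mul_two_pi_mul_I, one_mul]

lemma E_pow2 {n : ℕ} (hn : 3 ≤ n) (m : ℕ) :
    (Complex.exp (Complex.I * ((π/n : ℝ):ℂ))) ^ (2*m*n+n-1)
      = -Complex.exp (-(Complex.I * ((π/n : ℝ):ℂ))) := by
  rw [← Complex.exp_nat_mul]
  have hn0 : (n:ℂ) ≠ 0 := Nat.cast_ne_zero.mpr (by omega)
  have hcast : ((2*m*n+n-1 : ℕ) : ℂ) = 2*(m:ℂ)*(n:ℂ) + (n:ℂ) - 1 := by
    rw [show (2*m*n+n-1 : ℕ) = 2*m*n+n-1 from rfl, Nat.cast_sub (by omega)]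
    push_cast; ring
  have key : ((2*m*n+n-1 : ℕ) : ℂ) * (Complex.I * ((π/n : ℝ):ℂ))
      = (m:ℤ) * (2*(π:ℝ)*Complex.I) + ((π:ℝ):ℂ) * Complex.I
        + -(Complex.I * ((π/n : ℝ):ℂ)) := by
    rw [hcast]
    push_cast
    field_simp
    ring
  rw [key, Complex.exp_add, Complex.exp_add, Complex.exp_int_mul_two_pi_mul_I,
    Complex.exp_pi_mul_I, one_mul, neg_one_mul]




lemma hh_real (n : ℕ) (r : ℝ) :
    hh n (r:ℂ) = ((∑' m : ℕ, c n m * r ^ (2*m*n+1) : ℝ) : ℂ) := by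
  rw [hh, Complex.ofReal_tsum]
  exact tsum_congr fun m => by push_cast; ring

lemma tsum_d_eq {n : ℕ} (hn : 3 ≤ n) (r : ℝ) :
    (∑' m : ℕ, d n m * r ^ (2*m*n+n-1))
      = ((n:ℝ)-1) * ∑' m : ℕ, A m / ((n:ℝ)*(2*m+1)-1) * r ^ (2*m*n+n-1) := by
  rw [← tsum_mul_left]
  exact tsum_congr fun m => by rw [d_eq hn]; ring

lemma gg_real {n : ℕ} (hn : 3 ≤ n) (r : ℝ) :
    gg n (r:ℂ) = ((∑' m : ℕ, A m / ((n:ℝ)*(2*m+1)-1) * r ^ (2*m*n+n-1) : ℝ) : ℂ) := by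
  have hn1 : ((n:ℂ) - 1) ≠ 0 := by
    intro h
    have : (n:ℂ) = 1 := by linear_combination h
    have : (n:ℕ) = 1 := by exact_mod_cast this
    omega
  rw [gg]
  have : (∑' m : ℕ, (d n m : ℂ) * (r:ℂ) ^ (2*m*n+n-1))
      = ((∑' m : ℕ, d n m * r ^ (2*m*n+n-1) : ℝ) : ℂ) := by
    rw [Complex.ofReal_tsum]
    exact tsum_congr fun m => by push_cast; ring
  rw [this, tsum_d_eq hn]
  push_cast
  field_simp

lemma hh_rot {n : ℕ} (hn : 3 ≤ n) (r : ℝ) :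
    hh n ((r:ℂ) * Complex.exp (Complex.I * ((π/n : ℝ):ℂ)))
      = Complex.exp (Complex.I * ((π/n : ℝ):ℂ))
        * ((∑' m : ℕ, c n m * r ^ (2*m*n+1) : ℝ) : ℂ) := by
  rw [hh]
  have h : ∀ m : ℕ, (c n m : ℂ) * ((r:ℂ) * Complex.exp (Complex.I * ((π/n : ℝ):ℂ))) ^ (2*m*n+1)
      = Complex.exp (Complex.I * ((π/n : ℝ):ℂ)) * ((c n m * r ^ (2*m*n+1) : ℝ) : ℂ) := by
    intro m
    rw [mul_pow, E_pow1 hn]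
    push_cast
    ring
  rw [tsum_congr h, tsum_mul_left, ← Complex.ofReal_tsum]

lemma gg_rot {n : ℕ} (hn : 3 ≤ n) (r : ℝ) :
    gg n ((r:ℂ) * Complex.exp (Complex.I * ((π/n : ℝ):ℂ)))
      = -Complex.exp (-(Complex.I * ((π/n : ℝ):ℂ)))
        * ((∑' m : ℕ, A m / ((n:ℝ)*(2*m+1)-1) * r ^ (2*m*n+n-1) : ℝ) : ℂ) := by
  have hn1 : ((n:ℂ) - 1) ≠ 0 := by
    intro h
    have : (n:ℂ) = 1 := by linear_combination h
    have : (n:ℕ) = 1 := by exact_mod_cast this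
    omega
  rw [gg]
  have h : ∀ m : ℕ, (d n m : ℂ) * ((r:ℂ) * Complex.exp (Complex.I * ((π/n : ℝ):ℂ))) ^ (2*m*n+n-1)
      = (-Complex.exp (-(Complex.I * ((π/n : ℝ):ℂ)))) * ((d n m * r ^ (2*m*n+n-1) : ℝ) : ℂ) := by
    intro m
    rw [mul_pow, E_pow2 hn]
    push_cast
    ring
  rw [tsum_congr h, tsum_mul_left, ← Complex.ofReal_tsum, tsum_d_eq hn]
  push_cast
  field_simp


theorem stmt_12 (n : ℕ) (hn : 3 ≤ n) (r : ℝ) (hr : r ∈ Set.Ioc (0 : ℝ) 1) :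
    ((f n 0 (r : ℂ)).im = 0 ∧ 0 < (f n 0 (r : ℂ)).re) ∧
    ((Complex.exp (-(Complex.I * ((π / n : ℝ) : ℂ))) *
        f n 0 ((r : ℂ) * Complex.exp (Complex.I * ((π / n : ℝ) : ℂ)))).im = 0 ∧
      0 < (Complex.exp (-(Complex.I * ((π / n : ℝ) : ℂ))) *
        f n 0 ((r : ℂ) * Complex.exp (Complex.I * ((π / n : ℝ) : ℂ)))).re) := by
  obtain ⟨hr0, hr1⟩ := hr
  set S1 : ℝ := ∑' m : ℕ, c n m * r ^ (2*m*n+1) with hS1def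
  set Q : ℝ := ∑' m : ℕ, A m / ((n:ℝ)*(2*m+1)-1) * r ^ (2*m*n+n-1) with hQdef
  have hS1pos : 0 < S1 := by
    refine Summable.tsum_pos (summable_S1 hn hr0 hr1)
      (fun m => mul_nonneg (c_nonneg n m) (pow_nonneg hr0.le _)) 0 ?_
    have : c n 0 = 1 := by simp [c, A_zero]
    simpa [this] using hr0
  have hQnn : 0 ≤ Q :=
    tsum_nonneg fun m => mul_nonneg (dq_nonneg hn m) (pow_nonneg hr0.le _)
  have hdiff : 0 < S1 - Q := by
    have hsub : S1 - Q = ∑' m : ℕ,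
        (c n m * r ^ (2*m*n+1) - A m / ((n:ℝ)*(2*m+1)-1) * r ^ (2*m*n+n-1)) :=
      (Summable.tsum_sub (summable_S1 hn hr0 hr1) (summable_S2q hn hr0 hr1)).symm
    rw [hsub]
    exact Summable.tsum_pos ((summable_S1 hn hr0 hr1).sub (summable_S2q hn hr0 hr1))
      (fun m => (term_pos hn hr0 hr1 m).le) 0 (term_pos hn hr0 hr1 0)
  have hconj : (starRingEnd ℂ) (Complex.exp (-(Complex.I * ((π/n : ℝ):ℂ))))
      = Complex.exp (Complex.I * ((π/n : ℝ):ℂ)) := by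
    rw [← Complex.exp_conj]
    congr 1
    simp [Complex.conj_I]
  have hE : Complex.exp (-(Complex.I * ((π/n : ℝ):ℂ))) * Complex.exp (Complex.I * ((π/n : ℝ):ℂ)) = 1 := by
    rw [← Complex.exp_add]; simp
  have hf1 : f n 0 (r:ℂ) = ((S1 + Q : ℝ) : ℂ) := by
    rw [f, hh_real, gg_real hn]
    simp only [Complex.ofReal_zero, mul_zero, zero_div, Complex.exp_zero, neg_zero, one_mul,
      Complex.conj_ofReal]
    rw [Complex.ofReal_add]
  have hf2 : Complex.exp (-(Complex.I * ((π/n : ℝ):ℂ))) *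
      f n 0 ((r:ℂ) * Complex.exp (Complex.I * ((π/n : ℝ):ℂ))) = ((S1 - Q : ℝ) : ℂ) := by
    rw [f, hh_rot hn, gg_rot hn, map_mul, map_neg, Complex.conj_ofReal, hconj]
    simp only [Complex.ofReal_zero, mul_zero, zero_div, Complex.exp_zero, neg_zero, one_mul]
    rw [Complex.ofReal_sub]
    linear_combination (((S1:ℝ):ℂ) - ((Q:ℝ):ℂ)) * hE
  refine ⟨⟨?_, ?_⟩, ?_, ?_⟩
  · rw [hf1]; exact Complex.ofReal_im _
  · rw [hf1, Complex.ofReal_re]; linarith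
  · rw [hf2]; exact Complex.ofReal_im _
  · rw [hf2, Complex.ofReal_re]; linarith
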